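/- Let α > 0, σ ≥ 0 and ω > 0 be real. Then the imaginary part of 1 − √(2α)/(2·√(iω + σ²)) is strictly positive (with principal square roots). In particular, the derivative ∂_λ𝕕(λ; 0, σ) = 1 − √(2α)/(2√(λ+σ²)) of the characteristic function is nonzero at λ = iω, so every purely imaginary root iω with ω > 0 of 𝕕(·; 0, σ) is a simple root. -/

import Mathlib

/-- Principal complex square root: branch cut along `(-∞,0]`, `Re (csqrt z) ≥ 0`. -/
noncomputable def csqrt (z : ℂ) : ℂ := z ^ (1/2 : ℂ)

lemma csqrt_im_pos {z : ℂ} (hz : 0 < z.im) : 0 < (csqrt z).im := by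
  have hz0 : z ≠ 0 := by
    intro h; rw [h] at hz; simp at hz
  unfold csqrt
  rw [Complex.cpow_def_of_ne_zero hz0]
  rw [Complex.exp_im]
  apply mul_pos (Real.exp_pos _)
  have him : (Complex.log z * (1/2)).im = z.arg / 2 := by
    simp [Complex.log_im]
    ring
  rw [him]
  apply Real.sin_pos_of_pos_of_lt_pi
  · have : 0 < z.arg := by
      rw [Complex.arg_of_im_pos hz]
      rw [Real.arccos_pos]
      have habs : z.re < ‖z‖ := by
        have := Complex.abs_re_lt_norm.mpr (ne_of_gt hz)
        exact (abs_lt.mp this).2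
      have : (0:ℝ) < ‖z‖ := by
        rw [norm_pos_iff]; intro h; rw [h] at hz; simp at hz
      rw [div_lt_one this]
      exact habs
    linarith
  · have h1 : z.arg ≤ Real.pi := Complex.arg_le_pi z
    have h2 : 0 < Real.pi := Real.pi_pos
    linarith

/-- For real `α > 0`, `σ ≥ 0`, `ω > 0`, the imaginary part of
`1 − √(2α)/(2√(iω+σ²))` is strictly positive; in particular the derivative
`∂_λ𝕕(iω;0,σ) = 1 − √(2α)/(2√(iω+σ²))` is nonzero, so every purely imaginary root
`iω`, `ω > 0`, of `𝕕(·;0,σ)` is simple. -/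
theorem stmt_4 (α σ : ℝ) (hα : 0 < α) (hσ : 0 ≤ σ) (ω : ℝ) (hω : 0 < ω) :
    0 < (1 - (Real.sqrt (2*α) : ℂ) / (2 * csqrt (Complex.I * ω + (σ:ℂ)^2))).im ∧
    (1 - (Real.sqrt (2*α) : ℂ) / (2 * csqrt (Complex.I * ω + (σ:ℂ)^2))) ≠ 0 := by
  set z : ℂ := Complex.I * ω + (σ:ℂ)^2 with hz
  have hzim : 0 < z.im := by
    simp [hz, ← Complex.ofReal_pow]; exact hω
  have hwim : 0 < (csqrt z).im := csqrt_im_pos hzim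
  set w : ℂ := csqrt z with hw
  have hwne : w ≠ 0 := by
    intro h
    rw [h] at hwim; simp at hwim
  have hc : 0 < Real.sqrt (2*α) := Real.sqrt_pos.mpr (by linarith)
  have key : 0 < (1 - (Real.sqrt (2*α) : ℂ) / (2 * w)).im := by
    have hns : 0 < Complex.normSq (2*w) := by
      rw [Complex.normSq_pos]
      simpa using hwne
    rw [Complex.sub_im, Complex.div_im]
    simp only [Complex.one_im, Complex.ofReal_im, Complex.ofReal_re]
    have h2w : (2 * w).im = 2 * w.im := by simp
    have hpos : 0 < Real.sqrt (2*α) * (2*w).im / Complex.normSq (2*w) := by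
      rw [h2w]; positivity
    simp only [zero_mul, zero_div]
    linarith
  refine ⟨key, ?_⟩
  intro h
  rw [h] at key
  simp at key
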